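/- arXiv:2512.07315 — 7 statements merged into one kernel-verified Lean document; each statement's English description precedes it below -/
import Mathlib

section
/- Let T be the Sommerville tetrahedron with vertices A=(-1,0,0), B=(1,0,0), C=(0,-1,1), D=(0,1,1), and let M=(0,0,0) be the midpoint of its longest edge AB. Then the two sub-tetrahedra A M C D and M B C D produced by longest-edge bisection are isometric: there is a Euclidean isometry of ℝ³ mapping the vertex set {A,M,C,D} onto {M,B,C,D}. -/
/-- Longest-edge bisection of the Sommerville tetrahedron `A B C D` at the midpoint `M`
of its longest edge `AB` produces two isometric sub-tetrahedra `A M C D` and `M B C D`: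
some Euclidean isometry of `ℝ³` (an orthogonal matrix composed with a translation)
maps the vertex set `{A, M, C, D}` onto `{M, B, C, D}`. -/
theorem sommerville_children_isometric :
    let A : Fin 3 → ℝ := ![-1, 0, 0]
    let B : Fin 3 → ℝ := ![1, 0, 0]
    let C : Fin 3 → ℝ := ![0, -1, 1]
    let D : Fin 3 → ℝ := ![0, 1, 1]
    let M : Fin 3 → ℝ := ![0, 0, 0]
    ∃ (R : Matrix (Fin 3) (Fin 3) ℝ) (b : Fin 3 → ℝ),
      R ∈ Matrix.orthogonalGroup (Fin 3) ℝ ∧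
      (fun x => b + R.mulVec x) '' ({A, M, C, D} : Set (Fin 3 → ℝ)) = {M, B, C, D} := by
  intro A B C D M
  refine ⟨!![-1,0,0; 0,1,0; 0,0,1], 0, ?_, ?_⟩
  · rw [Matrix.mem_orthogonalGroup_iff]
    ext i j
    fin_cases i <;> fin_cases j <;>
      norm_num [Matrix.mul_apply, Fin.sum_univ_three, Matrix.one_apply, Fin.ext_iff,
          Matrix.cons_val_two, Matrix.tail_cons, Matrix.head_cons]
  · have hA : (0 : Fin 3 → ℝ) + (!![-1,0,0; 0,1,0; 0,0,1]).mulVec A = B := by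
      funext i; fin_cases i <;>
        simp [A, B, Matrix.mulVec, dotProduct, Fin.sum_univ_three]
    have hM : (0 : Fin 3 → ℝ) + (!![-1,0,0; 0,1,0; 0,0,1]).mulVec M = M := by
      funext i; fin_cases i <;>
        simp [M, Matrix.mulVec, dotProduct, Fin.sum_univ_three]
    have hC : (0 : Fin 3 → ℝ) + (!![-1,0,0; 0,1,0; 0,0,1]).mulVec C = C := by
      funext i; fin_cases i <;>
        simp [C, Matrix.mulVec, dotProduct, Fin.sum_univ_three]
    have hD : (0 : Fin 3 → ℝ) + (!![-1,0,0; 0,1,0; 0,0,1]).mulVec D = D := by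
      funext i; fin_cases i <;>
        simp [D, Matrix.mulVec, dotProduct, Fin.sum_univ_three]
    rw [Set.image_insert_eq, Set.image_insert_eq, Set.image_insert_eq,
      Set.image_singleton, hA, hM, hC, hD]
    ext x
    simp only [Set.mem_insert_iff, Set.mem_singleton_iff]
    tauto
end

section
/- Let τ^S be the tetrahedron with vertices A=(0,0,0), B=(1,0,0), C=(1/2, √2/2, 0), D=(1/2, 0, √2/2), whose longest edge is AB, and let M=(1/2,0,0). Then each of the two sub-tetrahedra A M C D and M B C D is similar (via a map x ↦ b + λRx with λ>0, R ∈ O(3)) to the tetrahedron τ^H with vertices (0,0,0), (1,0,0), (1/2, 1/2, 0), (1/2, 1/2, 1/2). -/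
/-- Euclidean distance between two points of `ℝ³` (represented as `Fin 3 → ℝ`). -/
noncomputable def dist3 (x y : Fin 3 → ℝ) : ℝ :=
  Real.sqrt ((x 0 - y 0) ^ 2 + (x 1 - y 1) ^ 2 + (x 2 - y 2) ^ 2)

/-- Two subsets of `ℝ³` are similar if a similarity transformation `x ↦ b + λ R x`
with `λ > 0` and `R ∈ O(3)` maps one onto the other. -/
def SimilarSet (S T : Set (Fin 3 → ℝ)) : Prop :=
  ∃ (lam : ℝ) (R : Matrix (Fin 3) (Fin 3) ℝ) (b : Fin 3 → ℝ),
    0 < lam ∧ R ∈ Matrix.orthogonalGroup (Fin 3) ℝ ∧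
    (fun x => b + lam • R.mulVec x) '' S = T

set_option maxHeartbeats 1000000 in
/-- LEB of τ^S at the midpoint of its longest edge AB gives two children each similar to τ^H. -/
theorem tauS_children_similar_tauH :
    let A : Fin 3 → ℝ := ![0, 0, 0]
    let B : Fin 3 → ℝ := ![1, 0, 0]
    let C : Fin 3 → ℝ := ![1/2, Real.sqrt 2 / 2, 0]
    let D : Fin 3 → ℝ := ![1/2, 0, Real.sqrt 2 / 2]
    let M : Fin 3 → ℝ := ![1/2, 0, 0]
    (∀ x ∈ ({A, B, C, D} : Set (Fin 3 → ℝ)), ∀ y ∈ ({A, B, C, D} : Set (Fin 3 → ℝ)),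
      dist3 x y ≤ dist3 A B) ∧
    SimilarSet ({A, M, C, D} : Set (Fin 3 → ℝ)) ({![0, 0, 0], ![1, 0, 0], ![1/2, 1/2, 0], ![1/2, 1/2, 1/2]} : Set (Fin 3 → ℝ)) ∧
    SimilarSet ({M, B, C, D} : Set (Fin 3 → ℝ)) ({![0, 0, 0], ![1, 0, 0], ![1/2, 1/2, 0], ![1/2, 1/2, 1/2]} : Set (Fin 3 → ℝ)) := by
  intro A B C D M
  have hs : Real.sqrt 2 ^ 2 = 2 := Real.sq_sqrt (by norm_num)
  constructor
  · -- longest edge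
    have hAB : dist3 A B = 1 := by
      simp [dist3, A, B]
    rintro x hx y hy
    rw [hAB]
    simp only [Set.mem_insert_iff, Set.mem_singleton_iff] at hx hy
    rcases hx with rfl | rfl | rfl | rfl <;> rcases hy with rfl | rfl | rfl | rfl <;>
      · unfold dist3
        apply Real.sqrt_le_one.mpr
        simp only [A, B, C, D, Matrix.cons_val_zero, Matrix.cons_val_one, Matrix.head_cons,
          Matrix.cons_val_two, Matrix.tail_cons]
        nlinarith [hs]
  constructor
  · -- first child
    refine ⟨1, !![0, -Real.sqrt 2/2, Real.sqrt 2/2; 0, -Real.sqrt 2/2, -Real.sqrt 2/2;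
        -1, 0, 0], ![1/2, 1/2, 1/2], one_pos, ?_, ?_⟩
    · rw [Matrix.mem_orthogonalGroup_iff]
      ext i j
      fin_cases i <;> fin_cases j <;>
        simp [Matrix.mul_apply, Fin.sum_univ_three, Matrix.one_apply] <;>
        ring_nf <;> try linarith [hs]
    · rw [Set.image_insert_eq, Set.image_insert_eq, Set.image_insert_eq, Set.image_singleton]
      have hA : ![1/2, 1/2, 1/2] + (1:ℝ) • Matrix.mulVec
          !![0, -Real.sqrt 2/2, Real.sqrt 2/2; 0, -Real.sqrt 2/2, -Real.sqrt 2/2; -1, 0, 0] A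
          = ![1/2, 1/2, 1/2] := by
        funext i
        fin_cases i <;>
            simp [A, Matrix.mulVec, dotProduct, Fin.sum_univ_three] <;>
            ring_nf <;> try linarith [hs]
      have hM : ![1/2, 1/2, 1/2] + (1:ℝ) • Matrix.mulVec
          !![0, -Real.sqrt 2/2, Real.sqrt 2/2; 0, -Real.sqrt 2/2, -Real.sqrt 2/2; -1, 0, 0] M
          = ![1/2, 1/2, 0] := by
        funext i
        fin_cases i <;>
            simp [M, Matrix.mulVec, dotProduct, Fin.sum_univ_three] <;>
            ring_nf <;> try linarith [hs]
      have hC : ![1/2, 1/2, 1/2] + (1:ℝ) • Matrix.mulVec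
          !![0, -Real.sqrt 2/2, Real.sqrt 2/2; 0, -Real.sqrt 2/2, -Real.sqrt 2/2; -1, 0, 0] C
          = ![0, 0, 0] := by
        funext i
        fin_cases i <;>
            simp [C, Matrix.mulVec, dotProduct, Fin.sum_univ_three] <;>
            ring_nf <;> try linarith [hs]
      have hD : ![1/2, 1/2, 1/2] + (1:ℝ) • Matrix.mulVec
          !![0, -Real.sqrt 2/2, Real.sqrt 2/2; 0, -Real.sqrt 2/2, -Real.sqrt 2/2; -1, 0, 0] D
          = ![1, 0, 0] := by
        funext i
        fin_cases i <;>
            simp [D, Matrix.mulVec, dotProduct, Fin.sum_univ_three] <;>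
            ring_nf <;> try linarith [hs]
      rw [hA, hM, hC, hD]
      ext x
      simp only [Set.mem_insert_iff, Set.mem_singleton_iff]
      tauto
  · -- second child
    refine ⟨1, !![0, -Real.sqrt 2/2, Real.sqrt 2/2; 0, -Real.sqrt 2/2, -Real.sqrt 2/2;
        1, 0, 0], ![1/2, 1/2, -1/2], one_pos, ?_, ?_⟩
    · rw [Matrix.mem_orthogonalGroup_iff]
      ext i j
      fin_cases i <;> fin_cases j <;>
        simp [Matrix.mul_apply, Fin.sum_univ_three, Matrix.one_apply] <;>
        ring_nf <;> try linarith [hs]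
    · rw [Set.image_insert_eq, Set.image_insert_eq, Set.image_insert_eq, Set.image_singleton]
      have hM : ![1/2, 1/2, -1/2] + (1:ℝ) • Matrix.mulVec
          !![0, -Real.sqrt 2/2, Real.sqrt 2/2; 0, -Real.sqrt 2/2, -Real.sqrt 2/2; 1, 0, 0] M
          = ![1/2, 1/2, 0] := by
        funext i
        fin_cases i <;>
            simp [M, Matrix.mulVec, dotProduct, Fin.sum_univ_three] <;>
            ring_nf <;> try linarith [hs]
      have hB : ![1/2, 1/2, -1/2] + (1:ℝ) • Matrix.mulVec
          !![0, -Real.sqrt 2/2, Real.sqrt 2/2; 0, -Real.sqrt 2/2, -Real.sqrt 2/2; 1, 0, 0] B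
          = ![1/2, 1/2, 1/2] := by
        funext i
        fin_cases i <;>
            simp [B, Matrix.mulVec, dotProduct, Fin.sum_univ_three] <;>
            ring_nf <;> try linarith [hs]
      have hC : ![1/2, 1/2, -1/2] + (1:ℝ) • Matrix.mulVec
          !![0, -Real.sqrt 2/2, Real.sqrt 2/2; 0, -Real.sqrt 2/2, -Real.sqrt 2/2; 1, 0, 0] C
          = ![0, 0, 0] := by
        funext i
        fin_cases i <;>
            simp [C, Matrix.mulVec, dotProduct, Fin.sum_univ_three] <;>
            ring_nf <;> try linarith [hs]
      have hD : ![1/2, 1/2, -1/2] + (1:ℝ) • Matrix.mulVec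
          !![0, -Real.sqrt 2/2, Real.sqrt 2/2; 0, -Real.sqrt 2/2, -Real.sqrt 2/2; 1, 0, 0] D
          = ![1, 0, 0] := by
        funext i
        fin_cases i <;>
            simp [D, Matrix.mulVec, dotProduct, Fin.sum_univ_three] <;>
            ring_nf <;> try linarith [hs]
      rw [hM, hB, hC, hD]
      ext x
      simp only [Set.mem_insert_iff, Set.mem_singleton_iff]
      tauto
end

section
/- Let τ^H be the tetrahedron with vertices A=(0,0,0), B=(1,0,0), C=(1/2, 1/2, 0), D=(1/2, 1/2, 1/2). The edge AB is a longest edge of τ^H; letting M=(1/2,0,0), each of the sub-tetrahedra A M C D and M B C D is similar to the path tetrahedron with vertices (0,0,0), (1,0,0), (1,1,0), (1,1,1). -/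
/-- LEB of τ^H at the midpoint of its longest edge AB gives two children each similar to the path tetrahedron. -/
theorem tauH_children_similar_path :
    let A : Fin 3 → ℝ := ![0, 0, 0]
    let B : Fin 3 → ℝ := ![1, 0, 0]
    let C : Fin 3 → ℝ := ![1/2, 1/2, 0]
    let D : Fin 3 → ℝ := ![1/2, 1/2, 1/2]
    let M : Fin 3 → ℝ := ![1/2, 0, 0]
    (∀ x ∈ ({A, B, C, D} : Set (Fin 3 → ℝ)), ∀ y ∈ ({A, B, C, D} : Set (Fin 3 → ℝ)),
      dist3 x y ≤ dist3 A B) ∧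
    SimilarSet ({A, M, C, D} : Set (Fin 3 → ℝ)) ({![0, 0, 0], ![1, 0, 0], ![1, 1, 0], ![1, 1, 1]} : Set (Fin 3 → ℝ)) ∧
    SimilarSet ({M, B, C, D} : Set (Fin 3 → ℝ)) ({![0, 0, 0], ![1, 0, 0], ![1, 1, 0], ![1, 1, 1]} : Set (Fin 3 → ℝ)) := by
  intro A B C D M
  refine ⟨?_, ?_, ?_⟩
  · -- longest edge
    have hAB : dist3 A B = 1 := by
      simp only [dist3, A, B, Matrix.cons_val_zero, Matrix.cons_val_one, Matrix.cons_val_two, Matrix.head_cons]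
      norm_num
    intro x hx y hy
    rw [hAB]
    simp only [Set.mem_insert_iff, Set.mem_singleton_iff] at hx hy
    rcases hx with rfl | rfl | rfl | rfl <;> rcases hy with rfl | rfl | rfl | rfl <;>
      · refine Real.sqrt_le_one.mpr ?_
        norm_num [A, B, C, D, Matrix.cons_val_zero, Matrix.cons_val_one, Matrix.cons_val_two, Matrix.head_cons]
  · refine ⟨2, 1, 0, by norm_num, one_mem _, ?_⟩
    rw [Set.image_insert_eq, Set.image_insert_eq, Set.image_insert_eq, Set.image_singleton]
    have e1 : (0 : Fin 3 → ℝ) + (2:ℝ) • (1 : Matrix (Fin 3) (Fin 3) ℝ).mulVec A = ![0,0,0] := by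
      funext i; fin_cases i <;> simp [A, Matrix.mulVec_one] <;> norm_num
    have e2 : (0 : Fin 3 → ℝ) + (2:ℝ) • (1 : Matrix (Fin 3) (Fin 3) ℝ).mulVec M = ![1,0,0] := by
      funext i; fin_cases i <;> simp [M] <;> norm_num
    have e3 : (0 : Fin 3 → ℝ) + (2:ℝ) • (1 : Matrix (Fin 3) (Fin 3) ℝ).mulVec C = ![1,1,0] := by
      funext i; fin_cases i <;> simp [C] <;> norm_num
    have e4 : (0 : Fin 3 → ℝ) + (2:ℝ) • (1 : Matrix (Fin 3) (Fin 3) ℝ).mulVec D = ![1,1,1] := by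
      funext i; fin_cases i <;> simp [D] <;> norm_num
    rw [e1, e2, e3, e4]
  · refine ⟨2, !![-1,0,0; 0,1,0; 0,0,1], ![2,0,0], by norm_num, ?_, ?_⟩
    · rw [Matrix.mem_orthogonalGroup_iff]
      ext i j
      fin_cases i <;> fin_cases j <;>
        simp [Matrix.mul_apply, Fin.sum_univ_succ, Matrix.one_apply] <;> norm_num
    · rw [Set.image_insert_eq, Set.image_insert_eq, Set.image_insert_eq, Set.image_singleton]
      have e1 : (![2,0,0] : Fin 3 → ℝ) + (2:ℝ) • (!![-1,0,0; 0,1,0; 0,0,1]).mulVec M = ![1,0,0] := by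
        funext i; fin_cases i <;> simp [M, Matrix.mulVec, dotProduct, Fin.sum_univ_succ] <;> norm_num
      have e2 : (![2,0,0] : Fin 3 → ℝ) + (2:ℝ) • (!![-1,0,0; 0,1,0; 0,0,1]).mulVec B = ![0,0,0] := by
        funext i; fin_cases i <;> simp [B, Matrix.mulVec, dotProduct, Fin.sum_univ_succ] <;> norm_num
      have e3 : (![2,0,0] : Fin 3 → ℝ) + (2:ℝ) • (!![-1,0,0; 0,1,0; 0,0,1]).mulVec C = ![1,1,0] := by
        funext i; fin_cases i <;> simp [C, Matrix.mulVec, dotProduct, Fin.sum_univ_succ] <;> norm_num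
      have e4 : (![2,0,0] : Fin 3 → ℝ) + (2:ℝ) • (!![-1,0,0; 0,1,0; 0,0,1]).mulVec D = ![1,1,1] := by
        funext i; fin_cases i <;> simp [D, Matrix.mulVec, dotProduct, Fin.sum_univ_succ] <;> norm_num
      rw [e1, e2, e3, e4, Set.insert_comm]
end

section
/- Let τ^P be the tetrahedron with vertices A=(0,0,0), B=(1,0,0), C=(1/3, √2/3, 0), D=(2/3, √2/6, √6/6). The edge AB is a longest edge of τ^P; letting M=(1/2,0,0), each of the sub-tetrahedra A M C D and M B C D is similar to the tetrahedron τ^Q with vertices (0,0,0), (1,0,0), (1/2, √2/4, 0), (1/2, 0, 1/2). -/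
set_option maxHeartbeats 1000000

section aux
local notation "s2" => Real.sqrt 2
local notation "s6" => Real.sqrt 6

lemma aux1 : ∀ x ∈ ({![0,0,0], ![1,0,0], ![1/3, s2/3, 0], ![2/3, s2/6, s6/6]} : Set (Fin 3 → ℝ)),
    ∀ y ∈ ({![0,0,0], ![1,0,0], ![1/3, s2/3, 0], ![2/3, s2/6, s6/6]} : Set (Fin 3 → ℝ)),
    dist3 x y ≤ dist3 ![0,0,0] ![1,0,0] := by
  have h2 : s2 ^ 2 = 2 := Real.sq_sqrt (by norm_num)
  have h6 : s6 ^ 2 = 6 := Real.sq_sqrt (by norm_num)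
  have hAB : dist3 ![0,0,0] ![1,0,0] = 1 := by simp [dist3]
  rw [hAB]
  intro x hx y hy
  simp only [Set.mem_insert_iff, Set.mem_singleton_iff] at hx hy
  rcases hx with rfl|rfl|rfl|rfl <;> rcases hy with rfl|rfl|rfl|rfl <;>
    (rw [dist3, Real.sqrt_le_one] <;> simp <;> nlinarith [h2, h6])

lemma sim1 : SimilarSet ({![0,0,0], ![1/2,0,0], ![1/3, s2/3, 0], ![2/3, s2/6, s6/6]} : Set (Fin 3 → ℝ))
    ({![0,0,0], ![1,0,0], ![1/2, s2/4, 0], ![1/2, 0, 1/2]} : Set (Fin 3 → ℝ)) := by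
  have h2 : s2 ^ 2 = 2 := Real.sq_sqrt (by norm_num)
  have h6 : s6 ^ 2 = 6 := Real.sq_sqrt (by norm_num)
  have h26 : s2 ^ 2 * s6 ^ 2 = 12 := by rw [h2, h6]; norm_num
  have hm2 : s2 ^ 2 * s6 = 2 * s6 := by rw [h2]
  have hm6 : s2 * s6 ^ 2 = 6 * s2 := by rw [h6]; ring
  refine ⟨s6/2, !![s6/3, s2*s6/12, 1/2; s2*s6/6, -(s6/6), -(s2/2); 0, s2*s6/4, -(1/2)],
    0, by positivity, ?_, ?_⟩
  · rw [Matrix.mem_orthogonalGroup_iff]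
    ext i j
    fin_cases i <;> fin_cases j <;>
      simp [Matrix.mul_apply, Fin.sum_univ_three, Matrix.one_apply] <;>
      nlinarith [h2, h6, h26]
  · rw [Set.image_insert_eq, Set.image_insert_eq, Set.image_insert_eq, Set.image_singleton]
    have e1 : (0:Fin 3 → ℝ) + (s6/2) • (!![s6/3, s2*s6/12, 1/2; s2*s6/6, -(s6/6), -(s2/2); 0, s2*s6/4, -(1/2)]).mulVec ![0,0,0] = ![0,0,0] := by
      funext i; fin_cases i <;>
        simp [Matrix.mulVec, dotProduct, Fin.sum_univ_three]
    have e2 : (0:Fin 3 → ℝ) + (s6/2) • (!![s6/3, s2*s6/12, 1/2; s2*s6/6, -(s6/6), -(s2/2); 0, s2*s6/4, -(1/2)]).mulVec ![1/2,0,0] = ![1/2, s2/4, 0] := by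
      funext i; fin_cases i <;>
        simp [Matrix.mulVec, dotProduct, Fin.sum_univ_three] <;>
        nlinarith [h2, h6, h26, hm2, hm6]
    have e3 : (0:Fin 3 → ℝ) + (s6/2) • (!![s6/3, s2*s6/12, 1/2; s2*s6/6, -(s6/6), -(s2/2); 0, s2*s6/4, -(1/2)]).mulVec ![1/3, s2/3, 0] = ![1/2, 0, 1/2] := by
      funext i; fin_cases i <;>
        simp [Matrix.mulVec, dotProduct, Fin.sum_univ_three] <;>
        nlinarith [h2, h6, h26, hm2, hm6]
    have e4 : (0:Fin 3 → ℝ) + (s6/2) • (!![s6/3, s2*s6/12, 1/2; s2*s6/6, -(s6/6), -(s2/2); 0, s2*s6/4, -(1/2)]).mulVec ![2/3, s2/6, s6/6] = ![1,0,0] := by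
      funext i; fin_cases i <;>
        simp [Matrix.mulVec, dotProduct, Fin.sum_univ_three] <;>
        nlinarith [h2, h6, h26, hm2, hm6]
    rw [e1, e2, e3, e4]
    ext x
    simp only [Set.mem_insert_iff, Set.mem_singleton_iff]
    tauto

lemma sim2 : SimilarSet ({![1/2,0,0], ![1,0,0], ![1/3, s2/3, 0], ![2/3, s2/6, s6/6]} : Set (Fin 3 → ℝ))
    ({![0,0,0], ![1,0,0], ![1/2, s2/4, 0], ![1/2, 0, 1/2]} : Set (Fin 3 → ℝ)) := by
  have h2 : s2 ^ 2 = 2 := Real.sq_sqrt (by norm_num)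
  have h6 : s6 ^ 2 = 6 := Real.sq_sqrt (by norm_num)
  have h26 : s2 ^ 2 * s6 ^ 2 = 12 := by rw [h2, h6]; norm_num
  have hm2 : s2 ^ 2 * s6 = 2 * s6 := by rw [h2]
  have hm6 : s2 * s6 ^ 2 = 6 * s2 := by rw [h6]; ring
  refine ⟨s6/2, !![-(s6/3), s2*s6/6, 0; -(s2*s6/6), -(s6/3), 0; 0, 0, 1],
    ![1, s2/2, 0], by positivity, ?_, ?_⟩
  · rw [Matrix.mem_orthogonalGroup_iff]
    ext i j
    fin_cases i <;> fin_cases j <;>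
      simp [Matrix.mul_apply, Fin.sum_univ_three, Matrix.one_apply] <;>
      nlinarith [h2, h6, h26]
  · rw [Set.image_insert_eq, Set.image_insert_eq, Set.image_insert_eq, Set.image_singleton]
    have e1 : ![(1:ℝ), s2/2, 0] + (s6/2) • (!![-(s6/3), s2*s6/6, 0; -(s2*s6/6), -(s6/3), 0; 0, 0, 1]).mulVec ![1/2,0,0] = ![1/2, s2/4, 0] := by
      funext i; fin_cases i <;>
        simp [Matrix.mulVec, dotProduct, Fin.sum_univ_three] <;>
        nlinarith [h2, h6, h26, hm2, hm6]
    have e2 : ![(1:ℝ), s2/2, 0] + (s6/2) • (!![-(s6/3), s2*s6/6, 0; -(s2*s6/6), -(s6/3), 0; 0, 0, 1]).mulVec ![1,0,0] = ![0,0,0] := by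
      funext i; fin_cases i <;>
        simp [Matrix.mulVec, dotProduct, Fin.sum_univ_three] <;>
        nlinarith [h2, h6, h26, hm2, hm6]
    have e3 : ![(1:ℝ), s2/2, 0] + (s6/2) • (!![-(s6/3), s2*s6/6, 0; -(s2*s6/6), -(s6/3), 0; 0, 0, 1]).mulVec ![1/3, s2/3, 0] = ![1, 0, 0] := by
      funext i; fin_cases i <;>
        simp [Matrix.mulVec, dotProduct, Fin.sum_univ_three] <;>
        nlinarith [h2, h6, h26, hm2, hm6]
    have e4 : ![(1:ℝ), s2/2, 0] + (s6/2) • (!![-(s6/3), s2*s6/6, 0; -(s2*s6/6), -(s6/3), 0; 0, 0, 1]).mulVec ![2/3, s2/6, s6/6] = ![1/2, 0, 1/2] := by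
      funext i; fin_cases i <;>
        simp [Matrix.mulVec, dotProduct, Fin.sum_univ_three] <;>
        nlinarith [h2, h6, h26, hm2, hm6]
    rw [e1, e2, e3, e4]
    ext x
    simp only [Set.mem_insert_iff, Set.mem_singleton_iff]
    tauto
end aux

/-- LEB of τ^P at the midpoint of its longest edge AB gives two children each similar to τ^Q. -/
theorem tauP_children_similar_tauQ :
    let A : Fin 3 → ℝ := ![0, 0, 0]
    let B : Fin 3 → ℝ := ![1, 0, 0]
    let C : Fin 3 → ℝ := ![1/3, Real.sqrt 2 / 3, 0]
    let D : Fin 3 → ℝ := ![2/3, Real.sqrt 2 / 6, Real.sqrt 6 / 6]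
    let M : Fin 3 → ℝ := ![1/2, 0, 0]
    (∀ x ∈ ({A, B, C, D} : Set (Fin 3 → ℝ)), ∀ y ∈ ({A, B, C, D} : Set (Fin 3 → ℝ)),
      dist3 x y ≤ dist3 A B) ∧
    SimilarSet ({A, M, C, D} : Set (Fin 3 → ℝ)) ({![0, 0, 0], ![1, 0, 0], ![1/2, Real.sqrt 2 / 4, 0], ![1/2, 0, 1/2]} : Set (Fin 3 → ℝ)) ∧
    SimilarSet ({M, B, C, D} : Set (Fin 3 → ℝ)) ({![0, 0, 0], ![1, 0, 0], ![1/2, Real.sqrt 2 / 4, 0], ![1/2, 0, 1/2]} : Set (Fin 3 → ℝ)) := by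
  intro A B C D M
  exact ⟨aux1, sim1, sim2⟩
end

section
/- Let τ^Q be the tetrahedron with vertices A=(0,0,0), B=(1,0,0), C=(1/2, √2/4, 0), D=(1/2, 0, 1/2). The edge AB is a longest edge of τ^Q; letting M=(1/2,0,0), each of the sub-tetrahedra A M C D and M B C D is similar to the tetrahedron τ^H with vertices (0,0,0), (1,0,0), (1/2, 1/2, 0), (1/2, 1/2, 1/2). Consequently the longest-edge bisection dynamics on the similarity classes of τ^H, τ^P, τ^Q forms a cycle of length three. -/
lemma aux_longest :
    ∀ x ∈ ({![0,0,0], ![1,0,0], ![1/2, Real.sqrt 2/4, 0], ![1/2,0,1/2]} : Set (Fin 3 → ℝ)),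
    ∀ y ∈ ({![0,0,0], ![1,0,0], ![1/2, Real.sqrt 2/4, 0], ![1/2,0,1/2]} : Set (Fin 3 → ℝ)),
      dist3 x y ≤ dist3 ![0,0,0] ![1,0,0] := by
  have h2 : Real.sqrt 2 ^ 2 = 2 := Real.sq_sqrt (by norm_num)
  have hn := Real.sqrt_nonneg 2
  intro x hx y hy
  simp only [Set.mem_insert_iff, Set.mem_singleton_iff] at hx hy
  rcases hx with rfl | rfl | rfl | rfl <;> rcases hy with rfl | rfl | rfl | rfl <;>
    (unfold dist3; apply Real.sqrt_le_sqrt;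
     simp only [Matrix.cons_val_zero, Matrix.cons_val_one, Matrix.head_cons,
       Matrix.cons_val_two, Matrix.tail_cons]; nlinarith)

noncomputable def R1 : Matrix (Fin 3) (Fin 3) ℝ :=
  !![Real.sqrt 2/2, 0, Real.sqrt 2/2; Real.sqrt 2/2, 0, -(Real.sqrt 2/2); 0, 1, 0]

noncomputable def R2 : Matrix (Fin 3) (Fin 3) ℝ :=
  !![-(Real.sqrt 2/2), 0, Real.sqrt 2/2; -(Real.sqrt 2/2), 0, -(Real.sqrt 2/2); 0, 1, 0]

lemma target_reorder :
    ({![0,0,0], ![1/2,1/2,0], ![1/2,1/2,1/2], ![1,0,0]} : Set (Fin 3 → ℝ)) =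
    ({![0,0,0], ![1,0,0], ![1/2,1/2,0], ![1/2,1/2,1/2]} : Set (Fin 3 → ℝ)) := by
  ext z
  simp only [Set.mem_insert_iff, Set.mem_singleton_iff]
  tauto

lemma aux_sim1 :
    SimilarSet ({![0,0,0], ![1/2,0,0], ![1/2, Real.sqrt 2/4, 0], ![1/2,0,1/2]} : Set (Fin 3 → ℝ))
      ({![0,0,0], ![1,0,0], ![1/2,1/2,0], ![1/2,1/2,1/2]} : Set (Fin 3 → ℝ)) := by
  have h2 : Real.sqrt 2 ^ 2 = 2 := Real.sq_sqrt (by norm_num)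
  refine ⟨Real.sqrt 2, R1, ![0,0,0], Real.sqrt_pos.2 (by norm_num), ?_, ?_⟩
  · rw [Matrix.mem_orthogonalGroup_iff]
    ext i j
    fin_cases i <;> fin_cases j <;>
      simp [R1, Matrix.mul_apply, Fin.sum_univ_three, Matrix.one_apply] <;> nlinarith
  · rw [Set.image_insert_eq, Set.image_insert_eq, Set.image_insert_eq, Set.image_singleton]
    have e1 : ![(0:ℝ),0,0] + Real.sqrt 2 • R1.mulVec ![0,0,0] = ![0,0,0] := by
      funext i; fin_cases i <;>
        simp [R1, Matrix.mulVec, dotProduct, Fin.sum_univ_three]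
    have e2 : ![(0:ℝ),0,0] + Real.sqrt 2 • R1.mulVec ![1/2,0,0] = ![1/2,1/2,0] := by
      funext i; fin_cases i <;>
        simp [R1, Matrix.mulVec, dotProduct, Fin.sum_univ_three] <;> nlinarith
    have e3 : ![(0:ℝ),0,0] + Real.sqrt 2 • R1.mulVec ![1/2, Real.sqrt 2/4, 0]
        = ![1/2,1/2,1/2] := by
      funext i; fin_cases i <;>
        simp [R1, Matrix.mulVec, dotProduct, Fin.sum_univ_three] <;> nlinarith
    have e4 : ![(0:ℝ),0,0] + Real.sqrt 2 • R1.mulVec ![1/2,0,1/2] = ![1,0,0] := by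
      funext i; fin_cases i <;>
        simp [R1, Matrix.mulVec, dotProduct, Fin.sum_univ_three] <;> nlinarith
    rw [e1, e2, e3, e4]
    exact target_reorder

lemma aux_sim2 :
    SimilarSet ({![1/2,0,0], ![1,0,0], ![1/2, Real.sqrt 2/4, 0], ![1/2,0,1/2]} : Set (Fin 3 → ℝ))
      ({![0,0,0], ![1,0,0], ![1/2,1/2,0], ![1/2,1/2,1/2]} : Set (Fin 3 → ℝ)) := by
  have h2 : Real.sqrt 2 ^ 2 = 2 := Real.sq_sqrt (by norm_num)
  refine ⟨Real.sqrt 2, R2, ![1,1,0], Real.sqrt_pos.2 (by norm_num), ?_, ?_⟩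
  · rw [Matrix.mem_orthogonalGroup_iff]
    ext i j
    fin_cases i <;> fin_cases j <;>
      simp [R2, Matrix.mul_apply, Fin.sum_univ_three, Matrix.one_apply] <;> nlinarith
  · rw [Set.image_insert_eq, Set.image_insert_eq, Set.image_insert_eq, Set.image_singleton]
    have e1 : ![(1:ℝ),1,0] + Real.sqrt 2 • R2.mulVec ![1/2,0,0] = ![1/2,1/2,0] := by
      funext i; fin_cases i <;>
        simp [R2, Matrix.mulVec, dotProduct, Fin.sum_univ_three] <;> nlinarith
    have e2 : ![(1:ℝ),1,0] + Real.sqrt 2 • R2.mulVec ![1,0,0] = ![0,0,0] := by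
      funext i; fin_cases i <;>
        simp [R2, Matrix.mulVec, dotProduct, Fin.sum_univ_three] <;> nlinarith
    have e3 : ![(1:ℝ),1,0] + Real.sqrt 2 • R2.mulVec ![1/2, Real.sqrt 2/4, 0]
        = ![1/2,1/2,1/2] := by
      funext i; fin_cases i <;>
        simp [R2, Matrix.mulVec, dotProduct, Fin.sum_univ_three] <;> nlinarith
    have e4 : ![(1:ℝ),1,0] + Real.sqrt 2 • R2.mulVec ![1/2,0,1/2] = ![1,0,0] := by
      funext i; fin_cases i <;>
        simp [R2, Matrix.mulVec, dotProduct, Fin.sum_univ_three] <;> nlinarith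
    ext z
    simp only [Set.mem_insert_iff, Set.mem_singleton_iff, e1, e2, e3, e4]
    tauto

/-- LEB of τ^Q at the midpoint of its longest edge AB gives two children each similar to τ^H; hence LEB cycles τ^H → τ^P → τ^Q → τ^H, a cycle of length three on similarity classes. -/
theorem tauQ_children_similar_tauH :
    let A : Fin 3 → ℝ := ![0, 0, 0]
    let B : Fin 3 → ℝ := ![1, 0, 0]
    let C : Fin 3 → ℝ := ![1/2, Real.sqrt 2 / 4, 0]
    let D : Fin 3 → ℝ := ![1/2, 0, 1/2]
    let M : Fin 3 → ℝ := ![1/2, 0, 0]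
    (∀ x ∈ ({A, B, C, D} : Set (Fin 3 → ℝ)), ∀ y ∈ ({A, B, C, D} : Set (Fin 3 → ℝ)),
      dist3 x y ≤ dist3 A B) ∧
    SimilarSet ({A, M, C, D} : Set (Fin 3 → ℝ)) ({![0, 0, 0], ![1, 0, 0], ![1/2, 1/2, 0], ![1/2, 1/2, 1/2]} : Set (Fin 3 → ℝ)) ∧
    SimilarSet ({M, B, C, D} : Set (Fin 3 → ℝ)) ({![0, 0, 0], ![1, 0, 0], ![1/2, 1/2, 0], ![1/2, 1/2, 1/2]} : Set (Fin 3 → ℝ)) := by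
  exact ⟨aux_longest, aux_sim1, aux_sim2⟩
end

section
/- The four tetrahedra τ^S, τ^H, τ^P, τ^Q, given by vertex sets {(0,0,0),(1,0,0),(1/2,√2/2,0),(1/2,0,√2/2)}, {(0,0,0),(1,0,0),(1/2,1/2,0),(1/2,1/2,1/2)}, {(0,0,0),(1,0,0),(1/3,√2/3,0),(2/3,√2/6,√6/6)}, and {(0,0,0),(1,0,0),(1/2,√2/4,0),(1/2,0,1/2)} respectively, are pairwise non-similar: no similarity transformation x ↦ b + λRx (λ>0, R ∈ O(3)) maps the vertex set of one onto the vertex set of another. -/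
open Matrix

/-- Squared Euclidean distance on `Fin 3 → ℝ`. -/
noncomputable def qd (x y : Fin 3 → ℝ) : ℝ := ∑ i, (x i - y i)^2

lemma qd_eq_dot (x y : Fin 3 → ℝ) : qd x y = (x - y) ⬝ᵥ (x - y) := by
  simp [qd, dotProduct, sq]

lemma qd_eq_zero {x y : Fin 3 → ℝ} (h : qd x y = 0) : x = y := by
  rw [qd_eq_dot, dotProduct_self_eq_zero] at h
  exact sub_eq_zero.mp h

lemma qd_scale {R : Matrix (Fin 3) (Fin 3) ℝ} (hR : R ∈ Matrix.orthogonalGroup (Fin 3) ℝ)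
    (lam : ℝ) (b x y : Fin 3 → ℝ) :
    qd (b + lam • R.mulVec x) (b + lam • R.mulVec y) = lam^2 * qd x y := by
  have hR' : Rᵀ * R = 1 := (Matrix.mem_orthogonalGroup_iff' (Fin 3) ℝ).mp hR
  have key : (R.mulVec (x - y)) ⬝ᵥ (R.mulVec (x - y)) = (x - y) ⬝ᵥ (x - y) := by
    rw [Matrix.dotProduct_mulVec, ← Matrix.mulVec_transpose, Matrix.mulVec_mulVec, hR',
      Matrix.one_mulVec]
  have hdiff : (b + lam • R.mulVec x) - (b + lam • R.mulVec y) = lam • R.mulVec (x - y) := by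
    rw [Matrix.mulVec_sub, smul_sub]; abel
  rw [qd_eq_dot, hdiff, qd_eq_dot, smul_dotProduct, dotProduct_smul, key]
  simp [smul_smul]; ring

open Classical in
/-- Sum of squared distances over all ordered pairs of a finite point set. -/
noncomputable def P2 (F : Finset (Fin 3 → ℝ)) : ℝ := ∑ x ∈ F, ∑ y ∈ F, qd x y

open Classical in
/-- Sum of fourth powers of distances over all ordered pairs of a finite point set. -/
noncomputable def P4 (F : Finset (Fin 3 → ℝ)) : ℝ := ∑ x ∈ F, ∑ y ∈ F, (qd x y)^2

open Classical in
lemma similar_scale {S T : Set (Fin 3 → ℝ)} {FS FT : Finset (Fin 3 → ℝ)}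
    (hS : ↑FS = S) (hT : ↑FT = T) (h : SimilarSet S T) :
    ∃ lam : ℝ, 0 < lam ∧ P2 FT = lam^2 * P2 FS ∧ P4 FT = lam^4 * P4 FS := by
  obtain ⟨lam, R, b, hl, hR, him⟩ := h
  set f := fun x => b + lam • R.mulVec x with hf
  have hq : ∀ x y, qd (f x) (f y) = lam^2 * qd x y := fun x y => qd_scale hR lam b x y
  have hinj : Function.Injective f := by
    intro x y hxy
    have h0 : lam^2 * qd x y = 0 := by rw [← hq]; simp [hxy, qd]
    have : qd x y = 0 := by
      rcases mul_eq_zero.mp h0 with h | h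
      · exact absurd h (by positivity)
      · exact h
    exact qd_eq_zero this
  have hFT : FT = FS.image f := by
    apply Finset.coe_injective
    rw [Finset.coe_image, hS, hT, him]
  refine ⟨lam, hl, ?_, ?_⟩
  · rw [P2, hFT, Finset.sum_image (fun x _ y _ h => hinj h), P2, Finset.mul_sum]
    refine Finset.sum_congr rfl fun x _ => ?_
    rw [Finset.sum_image (fun x _ y _ h => hinj h), Finset.mul_sum]
    exact Finset.sum_congr rfl fun y _ => hq x y
  · rw [P4, hFT, Finset.sum_image (fun x _ y _ h => hinj h), P4, Finset.mul_sum]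
    refine Finset.sum_congr rfl fun x _ => ?_
    rw [Finset.sum_image (fun x _ y _ h => hinj h), Finset.mul_sum]
    refine Finset.sum_congr rfl fun y _ => ?_
    rw [hq x y]; ring

open Classical in
lemma sum_quad (g : (Fin 3 → ℝ) → ℝ) {a b c d : Fin 3 → ℝ}
    (hab : a ≠ b) (hac : a ≠ c) (had : a ≠ d) (hbc : b ≠ c) (hbd : b ≠ d) (hcd : c ≠ d) :
    ∑ x ∈ ({a, b, c, d} : Finset (Fin 3 → ℝ)), g x = g a + g b + g c + g d := by
  rw [Finset.sum_insert (by simp [hab, hac, had]),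
    Finset.sum_insert (by simp [hbc, hbd]),
    Finset.sum_insert (by simp [hcd]), Finset.sum_singleton]
  ring

open Classical in
lemma P2_expand {a b c d : Fin 3 → ℝ}
    (hab : a ≠ b) (hac : a ≠ c) (had : a ≠ d) (hbc : b ≠ c) (hbd : b ≠ d) (hcd : c ≠ d) :
    P2 ({a, b, c, d} : Finset (Fin 3 → ℝ)) =
      2*(qd a b + qd a c + qd a d + qd b c + qd b d + qd c d) := by
  have hsym : ∀ x y : Fin 3 → ℝ, qd y x = qd x y := by
    intro x y; unfold qd; apply Finset.sum_congr rfl; intro i _; ring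
  have h0 : ∀ x : Fin 3 → ℝ, qd x x = 0 := by intro x; simp [qd]
  rw [P2, sum_quad _ hab hac had hbc hbd hcd,
    sum_quad _ hab hac had hbc hbd hcd, sum_quad _ hab hac had hbc hbd hcd,
    sum_quad _ hab hac had hbc hbd hcd, sum_quad _ hab hac had hbc hbd hcd]
  rw [h0 a, h0 b, h0 c, h0 d, hsym b a, hsym c a, hsym d a, hsym c b, hsym d b, hsym d c]
  ring

open Classical in
lemma P4_expand {a b c d : Fin 3 → ℝ}
    (hab : a ≠ b) (hac : a ≠ c) (had : a ≠ d) (hbc : b ≠ c) (hbd : b ≠ d) (hcd : c ≠ d) :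
    P4 ({a, b, c, d} : Finset (Fin 3 → ℝ)) =
      2*((qd a b)^2 + (qd a c)^2 + (qd a d)^2 + (qd b c)^2 + (qd b d)^2 + (qd c d)^2) := by
  have hsym : ∀ x y : Fin 3 → ℝ, qd y x = qd x y := by
    intro x y; unfold qd; apply Finset.sum_congr rfl; intro i _; ring
  have h0 : ∀ x : Fin 3 → ℝ, qd x x = 0 := by intro x; simp [qd]
  rw [P4, sum_quad _ hab hac had hbc hbd hcd,
    sum_quad _ hab hac had hbc hbd hcd, sum_quad _ hab hac had hbc hbd hcd,
    sum_quad _ hab hac had hbc hbd hcd, sum_quad _ hab hac had hbc hbd hcd]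
  rw [h0 a, h0 b, h0 c, h0 d, hsym b a, hsym c a, hsym d a, hsym c b, hsym d b, hsym d c]
  ring

/-- The four tetrahedra τ^S, τ^H, τ^P, τ^Q in the LEB orbit of the Sommerville tetrahedron
are pairwise non-similar. -/
theorem orbit_pairwise_not_similar :
    let tS : Set (Fin 3 → ℝ) :=
      {![0, 0, 0], ![1, 0, 0], ![1/2, Real.sqrt 2 / 2, 0], ![1/2, 0, Real.sqrt 2 / 2]}
    let tH : Set (Fin 3 → ℝ) :=
      {![0, 0, 0], ![1, 0, 0], ![1/2, 1/2, 0], ![1/2, 1/2, 1/2]}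
    let tP : Set (Fin 3 → ℝ) :=
      {![0, 0, 0], ![1, 0, 0], ![1/3, Real.sqrt 2 / 3, 0],
        ![2/3, Real.sqrt 2 / 6, Real.sqrt 6 / 6]}
    let tQ : Set (Fin 3 → ℝ) :=
      {![0, 0, 0], ![1, 0, 0], ![1/2, Real.sqrt 2 / 4, 0], ![1/2, 0, 1/2]}
    ¬ SimilarSet tS tH ∧ ¬ SimilarSet tS tP ∧ ¬ SimilarSet tS tQ ∧
    ¬ SimilarSet tH tP ∧ ¬ SimilarSet tH tQ ∧ ¬ SimilarSet tP tQ := by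
  classical
  intro tS tH tP tQ
  have hs : Real.sqrt 2 ^ 2 = 2 := Real.sq_sqrt (by norm_num)
  have hs4 : Real.sqrt 2 ^ 4 = 4 := by
    rw [show Real.sqrt 2 ^ 4 = (Real.sqrt 2 ^ 2)^2 by ring, hs]; norm_num
  have ht : Real.sqrt 6 ^ 2 = 6 := Real.sq_sqrt (by norm_num)
  have ht4 : Real.sqrt 6 ^ 4 = 36 := by
    rw [show Real.sqrt 6 ^ 4 = (Real.sqrt 6 ^ 2)^2 by ring, ht]; norm_num
  set FS : Finset (Fin 3 → ℝ) :=
    {![0, 0, 0], ![1, 0, 0], ![1/2, Real.sqrt 2 / 2, 0], ![1/2, 0, Real.sqrt 2 / 2]} with hFS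
  set FH : Finset (Fin 3 → ℝ) :=
    {![0, 0, 0], ![1, 0, 0], ![1/2, 1/2, 0], ![1/2, 1/2, 1/2]} with hFH
  set FP : Finset (Fin 3 → ℝ) :=
    {![0, 0, 0], ![1, 0, 0], ![1/3, Real.sqrt 2 / 3, 0],
      ![2/3, Real.sqrt 2 / 6, Real.sqrt 6 / 6]} with hFP
  set FQ : Finset (Fin 3 → ℝ) :=
    {![0, 0, 0], ![1, 0, 0], ![1/2, Real.sqrt 2 / 4, 0], ![1/2, 0, 1/2]} with hFQ
  have cS : ↑FS = tS := by simp [hFS, tS]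
  have cH : ↑FH = tH := by simp [hFH, tH]
  have cP : ↑FP = tP := by simp [hFP, tP]
  have cQ : ↑FQ = tQ := by simp [hFQ, tQ]
  have ne0 : ∀ {u v : Fin 3 → ℝ}, u 0 ≠ v 0 → u ≠ v := fun h hv => h (congrFun hv 0)
  have ne1 : ∀ {u v : Fin 3 → ℝ}, u 1 ≠ v 1 → u ≠ v := fun h hv => h (congrFun hv 1)
  have ne2 : ∀ {u v : Fin 3 → ℝ}, u 2 ≠ v 2 → u ≠ v := fun h hv => h (congrFun hv 2)
  have s2pos : (0:ℝ) < Real.sqrt 2 := Real.sqrt_pos.mpr (by norm_num)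
  have sne : (![(1:ℝ)/2, Real.sqrt 2 / 2, 0] : Fin 3 → ℝ) ≠ ![1/2, 0, Real.sqrt 2 / 2] := by
    apply ne1; simp
  have vS2 : P2 FS = 10 := by
    rw [hFS, P2_expand (ne0 (by norm_num)) (ne0 (by norm_num)) (ne0 (by norm_num))
      (ne0 (by norm_num)) (ne0 (by norm_num)) sne]
    simp [qd, Fin.sum_univ_three]
    ring_nf
    rw [hs]; norm_num
  have vS4 : P4 FS = 17/2 := by
    rw [hFS, P4_expand (ne0 (by norm_num)) (ne0 (by norm_num)) (ne0 (by norm_num))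
      (ne0 (by norm_num)) (ne0 (by norm_num)) sne]
    simp [qd, Fin.sum_univ_three]
    ring_nf
    rw [hs, hs4]; norm_num
  have vH2 : P2 FH = 15/2 := by
    rw [hFH, P2_expand (ne0 (by norm_num)) (ne0 (by norm_num)) (ne0 (by norm_num))
      (ne0 (by norm_num)) (ne0 (by norm_num)) (ne2 (show (0:ℝ) ≠ 1/2 by norm_num))]
    simp [qd, Fin.sum_univ_three]
    norm_num
  have vH4 : P4 FH = 43/8 := by
    rw [hFH, P4_expand (ne0 (by norm_num)) (ne0 (by norm_num)) (ne0 (by norm_num))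
      (ne0 (by norm_num)) (ne0 (by norm_num)) (ne2 (show (0:ℝ) ≠ 1/2 by norm_num))]
    simp [qd, Fin.sum_univ_three]
    norm_num
  have vP2 : P2 FP = 20/3 := by
    rw [hFP, P2_expand (ne0 (by norm_num)) (ne0 (by norm_num)) (ne0 (by norm_num))
      (ne0 (by norm_num)) (ne0 (by norm_num)) (ne0 (by norm_num))]
    simp [qd, Fin.sum_univ_three]
    ring_nf
    rw [hs, ht]; norm_num
  have vP4 : P4 FP = 40/9 := by
    rw [hFP, P4_expand (ne0 (by norm_num)) (ne0 (by norm_num)) (ne0 (by norm_num))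
      (ne0 (by norm_num)) (ne0 (by norm_num)) (ne0 (by norm_num))]
    simp [qd, Fin.sum_univ_three]
    ring_nf
    rw [hs, hs4, ht, ht4]; norm_num
  have vQ2 : P2 FQ = 25/4 := by
    rw [hFQ, P2_expand (ne0 (by norm_num)) (ne0 (by norm_num)) (ne0 (by norm_num))
      (ne0 (by norm_num)) (ne0 (by norm_num)) (ne2 (show (0:ℝ) ≠ 1/2 by norm_num))]
    simp [qd, Fin.sum_univ_three]
    ring_nf
    rw [hs]; norm_num
  have vQ4 : P4 FQ = 123/32 := by
    rw [hFQ, P4_expand (ne0 (by norm_num)) (ne0 (by norm_num)) (ne0 (by norm_num))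
      (ne0 (by norm_num)) (ne0 (by norm_num)) (ne2 (show (0:ℝ) ≠ 1/2 by norm_num))]
    simp [qd, Fin.sum_univ_three]
    ring_nf
    rw [hs, hs4]; norm_num
  refine ⟨?_, ?_, ?_, ?_, ?_, ?_⟩
  · intro h
    obtain ⟨lam, hl, h2, h4⟩ := similar_scale cS cH h
    rw [vS2, vH2] at h2; rw [vS4, vH4] at h4
    have e : lam^2 = 3/4 := by linarith
    have e4 : lam^4 = 9/16 := by rw [show lam^4 = (lam^2)^2 by ring, e]; norm_num
    rw [e4] at h4; norm_num at h4
  · intro h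
    obtain ⟨lam, hl, h2, h4⟩ := similar_scale cS cP h
    rw [vS2, vP2] at h2; rw [vS4, vP4] at h4
    have e : lam^2 = 2/3 := by linarith
    have e4 : lam^4 = 4/9 := by rw [show lam^4 = (lam^2)^2 by ring, e]; norm_num
    rw [e4] at h4; norm_num at h4
  · intro h
    obtain ⟨lam, hl, h2, h4⟩ := similar_scale cS cQ h
    rw [vS2, vQ2] at h2; rw [vS4, vQ4] at h4
    have e : lam^2 = 5/8 := by linarith
    have e4 : lam^4 = 25/64 := by rw [show lam^4 = (lam^2)^2 by ring, e]; norm_num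
    rw [e4] at h4; norm_num at h4
  · intro h
    obtain ⟨lam, hl, h2, h4⟩ := similar_scale cH cP h
    rw [vH2, vP2] at h2; rw [vH4, vP4] at h4
    have e : lam^2 = 8/9 := by linarith
    have e4 : lam^4 = 64/81 := by rw [show lam^4 = (lam^2)^2 by ring, e]; norm_num
    rw [e4] at h4; norm_num at h4
  · intro h
    obtain ⟨lam, hl, h2, h4⟩ := similar_scale cH cQ h
    rw [vH2, vQ2] at h2; rw [vH4, vQ4] at h4
    have e : lam^2 = 5/6 := by linarith
    have e4 : lam^4 = 25/36 := by rw [show lam^4 = (lam^2)^2 by ring, e]; norm_num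
    rw [e4] at h4; norm_num at h4
  · intro h
    obtain ⟨lam, hl, h2, h4⟩ := similar_scale cP cQ h
    rw [vP2, vQ2] at h2; rw [vP4, vQ4] at h4
    have e : lam^2 = 15/16 := by linarith
    have e4 : lam^4 = 225/256 := by rw [show lam^4 = (lam^2)^2 by ring, e]; norm_num
    rw [e4] at h4; norm_num at h4
end

section
/- For any z ∈ ℂ with Im(z) > 0, any w ∈ ℂ and t > 0 satisfying |w|² + t² ≤ 1, |w−1|² + t² ≤ 1 and |w−z|² + t² ≤ 1, the volume of the tetrahedron with vertices (0,0,0), (1,0,0), (Re z, Im z, 0), (Re w, Im w, t) is at most √2/12, with equality if and only if the tetrahedron is regular with all edges of length 1 (i.e., z = 1/2 + (√3/2)i, w = 1/2 + (√3/6)i, t = √6/3, assuming also |z| ≤ 1 and |z−1| ≤ 1). -/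
set_option maxHeartbeats 1000000

private lemma tetra_key (b y t : ℝ) (hb : 0 < b) (ht : 0 < t)
    (h1 : y^2+t^2 ≤ 3/4) (h2 : (y-b)^2 + t^2 ≤ 1) (h3 : b^2 ≤ 3/4) :
    b^2*t^2 ≤ 1/2 := by
  nlinarith [mul_nonneg (mul_pos hb hb).le (sub_nonneg.mpr h1),
    mul_nonneg (mul_pos hb hb).le (sub_nonneg.mpr h2), sq_nonneg (b*(3*y-b)),
    sq_nonneg (3*y-b), mul_nonneg (sub_nonneg.mpr h3) ht.le, sq_nonneg t, sq_nonneg b]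

private lemma tetra_key1 (b y t : ℝ) (hb : 0 < b) (ht : 0 < t)
    (h1 : y^2+t^2 < 3/4) (h2 : (y-b)^2 + t^2 ≤ 1) (h3 : b^2 ≤ 3/4) :
    b^2*t^2 < 1/2 := by
  nlinarith [mul_pos (mul_pos hb hb) (sub_pos.mpr h1),
    mul_nonneg (mul_pos hb hb).le (sub_nonneg.mpr h2), sq_nonneg (b*(3*y-b)),
    sq_nonneg (3*y-b), mul_nonneg (sub_nonneg.mpr h3) ht.le, sq_nonneg t, sq_nonneg b]

private lemma tetra_key2 (b y t : ℝ) (hb : 0 < b) (ht : 0 < t)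
    (h1 : y^2+t^2 ≤ 3/4) (h2 : (y-b)^2 + t^2 < 1) (h3 : b^2 ≤ 3/4) :
    b^2*t^2 < 1/2 := by
  nlinarith [mul_nonneg (mul_pos hb hb).le (sub_nonneg.mpr h1),
    mul_pos (mul_pos hb hb) (sub_pos.mpr h2), sq_nonneg (b*(3*y-b)),
    sq_nonneg (3*y-b), mul_nonneg (sub_nonneg.mpr h3) ht.le, sq_nonneg t, sq_nonneg b]

private lemma tetra_key3 (b y t : ℝ) (hb : 0 < b) (ht : 0 < t)
    (h1 : y^2+t^2 ≤ 3/4) (h2 : (y-b)^2 + t^2 ≤ 1) (h3 : b^2 < 3/4) :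
    b^2*t^2 < 1/2 := by
  nlinarith [mul_nonneg (mul_pos hb hb).le (sub_nonneg.mpr h1),
    mul_nonneg (mul_pos hb hb).le (sub_nonneg.mpr h2), sq_nonneg (b*(3*y-b)),
    sq_nonneg (3*y-b), mul_pos (sub_pos.mpr h3) ht, sq_nonneg t, sq_nonneg b,
    mul_pos ht ht]

private lemma sq_eq_of (c s : ℝ) (hc : 0 ≤ c) (hs : 0 ≤ s) (h : c^2 = s^2) : c = s := by
  rw [← Real.sqrt_sq hc, h, Real.sqrt_sq hs]

/-- Among canonical tetrahedra with vertices `(0,0,0)`, `(1,0,0)`, `(Re z, Im z, 0)`,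
`(Re w, Im w, t)` all of whose edges have length at most `1`, the volume
`|det| / 6` is at most `√2/12`, with equality exactly for the regular tetrahedron with
unit edge, i.e. `z = 1/2 + (√3/2) i`, `w = 1/2 + (√3/6) i`, `t = √6/3`. -/
theorem canonical_tetrahedron_volume_le (z w : ℂ) (t : ℝ) (hz : 0 < z.im) (ht : 0 < t)
    (hza : ‖z‖ ≤ 1) (hzb : ‖z - 1‖ ≤ 1)
    (h1 : ‖w‖ ^ 2 + t ^ 2 ≤ 1)
    (h2 : ‖w - 1‖ ^ 2 + t ^ 2 ≤ 1)
    (h3 : ‖w - z‖ ^ 2 + t ^ 2 ≤ 1) :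
    |Matrix.det !![(1 : ℝ), 0, 0; z.re, z.im, 0; w.re, w.im, t]| / 6 ≤ Real.sqrt 2 / 12 ∧
    (|Matrix.det !![(1 : ℝ), 0, 0; z.re, z.im, 0; w.re, w.im, t]| / 6 = Real.sqrt 2 / 12 ↔
      z = 1/2 + (Real.sqrt 3 / 2) * Complex.I ∧
      w = 1/2 + (Real.sqrt 3 / 6) * Complex.I ∧
      t = Real.sqrt 6 / 3) := by
  set a := z.re with ha
  set b := z.im with hbdef
  set x := w.re with hx
  set y := w.im with hy
  -- Convert the complex hypotheses to real inequalities
  have hA : x^2 + y^2 + t^2 ≤ 1 := by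
    rw [Complex.sq_norm, Complex.normSq_apply] at h1; nlinarith [h1]
  have hB : (x-1)^2 + y^2 + t^2 ≤ 1 := by
    rw [Complex.sq_norm, Complex.normSq_apply] at h2
    simp only [Complex.sub_re, Complex.sub_im, Complex.one_re, Complex.one_im] at h2
    nlinarith [h2]
  have hC : (x-a)^2 + (y-b)^2 + t^2 ≤ 1 := by
    rw [Complex.sq_norm, Complex.normSq_apply] at h3
    simp only [Complex.sub_re, Complex.sub_im] at h3
    nlinarith [h3]
  have hD : a^2 + b^2 ≤ 1 := by
    have h2 := Complex.sq_norm z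
    rw [Complex.normSq_apply] at h2
    nlinarith [norm_nonneg z]
  have hE : (a-1)^2 + b^2 ≤ 1 := by
    have h2 := Complex.sq_norm (z - 1)
    rw [Complex.normSq_apply] at h2
    simp only [Complex.sub_re, Complex.sub_im, Complex.one_re, Complex.one_im] at h2
    nlinarith [norm_nonneg (z - 1)]
  clear h1 h2 h3 hza hzb
  have hk1 : y^2 + t^2 ≤ 3/4 := by nlinarith [sq_nonneg (x - 1/2)]
  have hk2 : (y-b)^2 + t^2 ≤ 1 := by nlinarith [sq_nonneg (x - a)]
  have hk3 : b^2 ≤ 3/4 := by nlinarith [sq_nonneg (a - 1/2)]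
  have hab : (a - 1/2)^2 ≤ 3/4 - b^2 := by nlinarith
  have hxy : (x - 1/2)^2 ≤ 3/4 - (y^2 + t^2) := by nlinarith
  have hdet : Matrix.det !![(1 : ℝ), 0, 0; a, b, 0; x, y, t] = b * t := by
    simp [Matrix.det_fin_three]
  rw [hdet, abs_of_pos (mul_pos hz ht)]
  clear hdet hA hB hC hD hE
  have h2s : Real.sqrt 2 ^ 2 = 2 := Real.sq_sqrt (by norm_num)
  have h2n : (0:ℝ) ≤ Real.sqrt 2 := Real.sqrt_nonneg 2
  have hkey := tetra_key b y t hz ht hk1 hk2 hk3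
  have hpos : 0 < b * t + Real.sqrt 2 / 2 := by positivity
  have hle : b * t ≤ Real.sqrt 2 / 2 := by nlinarith [hkey, h2s, hpos]
  refine ⟨by linarith, ?_, ?_⟩
  · intro heq
    have hbt : b * t = Real.sqrt 2 / 2 := by linarith
    have hsq : b^2 * t^2 = 1/2 := by
      have hh : b^2 * t^2 = (b*t)^2 := by ring
      rw [hh, hbt, div_pow, h2s]; norm_num
    -- tightness of the three constraints
    have e3 : b^2 = 3/4 := by
      by_contra h
      exact absurd hsq (ne_of_lt (tetra_key3 b y t hz ht hk1 hk2 (lt_of_le_of_ne hk3 h)))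
    have e1 : y^2 + t^2 = 3/4 := by
      by_contra h
      exact absurd hsq (ne_of_lt (tetra_key1 b y t hz ht (lt_of_le_of_ne hk1 h) hk2 hk3))
    have e2 : (y-b)^2 + t^2 = 1 := by
      by_contra h
      exact absurd hsq (ne_of_lt (tetra_key2 b y t hz ht hk1 (lt_of_le_of_ne hk2 h) hk3))
    have s3 : Real.sqrt 3 ^ 2 = 3 := Real.sq_sqrt (by norm_num)
    have s3n : (0:ℝ) ≤ Real.sqrt 3 := Real.sqrt_nonneg 3
    have hbv : b = Real.sqrt 3 / 2 := by
      apply sq_eq_of _ _ hz.le (by positivity); rw [div_pow, s3]; linarith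
    have hav : a = 1/2 := by nlinarith [sq_nonneg (a - 1/2), hab, e3]
    have hxv : x = 1/2 := by nlinarith [sq_nonneg (x - 1/2), hxy, e1]
    have hby : b * y = 1/4 := by nlinarith
    have hyv : y = Real.sqrt 3 / 6 := by
      have hb0 : b ≠ 0 := ne_of_gt hz
      field_simp [hbv] at hby ⊢
      nlinarith [hby]
    have htv : t = Real.sqrt 6 / 3 := by
      have s6 : Real.sqrt 6 ^ 2 = 6 := Real.sq_sqrt (by norm_num)
      apply sq_eq_of _ _ ht.le (by positivity)
      rw [div_pow, s6]
      have : y^2 = 1/12 := by rw [hyv, div_pow, s3]; norm_num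
      linarith
    refine ⟨?_, ?_, htv⟩
    · apply Complex.ext <;> simp [← ha, ← hbdef, hav, hbv]
    · apply Complex.ext <;> simp [← hx, ← hy, hxv, hyv]
  · rintro ⟨hzv, hwv, htv⟩
    have hbv : b = Real.sqrt 3 / 2 := by rw [hbdef, hzv]; simp
    have s36 : Real.sqrt 3 * Real.sqrt 6 = 3 * Real.sqrt 2 := by
      rw [← Real.sqrt_mul (by norm_num), show (3:ℝ)*6 = 3^2*2 by norm_num,
        Real.sqrt_mul (by positivity), Real.sqrt_sq (by norm_num)]
    rw [hbv, htv]
    field_simp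
    linarith [s36]
end
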